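/- Let ℙ be a reference probability measure and 𝒫 a convex set of probability measures absolutely continuous with respect to ℙ, and set 𝒫ᵉ := {P ∈ 𝒫 : P ∼ ℙ (mutually absolutely continuous)}. Assume 𝒫ᵉ ≠ ∅. Then a random variable X satisfies X ∈ L¹(P) for every P ∈ 𝒫 if and only if X ∈ L¹(P) for every P ∈ 𝒫ᵉ; that is, ⋂_{P∈𝒫} L¹(P) = ⋂_{P∈𝒫ᵉ} L¹(P). -/
import Mathlib


open MeasureTheory Filter Set

/-- For a convex set `Pset` of probability measures absolutely continuous w.r.t. a reference
probability `μ`, with `Psetᵉ = {P ∈ Pset : P ∼ μ}` nonempty: a random variable `X` is in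
`L¹(P)` for every `P ∈ Pset` iff it is in `L¹(P)` for every `P ∈ Psetᵉ`. -/
theorem stmt_6 {Ω : Type*} [MeasurableSpace Ω]
    (μ : Measure Ω) [IsProbabilityMeasure μ]
    (Pset : Set (Measure Ω))
    (hprob : ∀ P ∈ Pset, IsProbabilityMeasure P)
    (hac : ∀ P ∈ Pset, P ≪ μ)
    (hconv : ∀ P ∈ Pset, ∀ P' ∈ Pset, ∀ t : ℝ, 0 ≤ t → t ≤ 1 →
      (ENNReal.ofReal t • P + ENNReal.ofReal (1 - t) • P') ∈ Pset)
    (hne : ∃ P ∈ Pset, μ ≪ P)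
    (X : Ω → ℝ) :
    (∀ P ∈ Pset, Integrable X P) ↔ (∀ P ∈ {P ∈ Pset | μ ≪ P}, Integrable X P) := by
  constructor
  · intro h P hP
    exact h P hP.1
  · intro h P hP
    obtain ⟨Q, hQ, hμQ⟩ := hne
    -- mixture R = (1/2) P + (1/2) Q
    set R : Measure Ω := ENNReal.ofReal (1/2) • P + ENNReal.ofReal (1 - 1/2) • Q with hR
    have hRmem : R ∈ Pset := hconv P hP Q hQ (1/2) (by norm_num) (by norm_num)
    have hμR : μ ≪ R := by
      refine hμQ.trans ?_
      intro s hs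
      simp only [hR, Measure.add_apply, Measure.smul_apply, smul_eq_mul] at hs
      have : ENNReal.ofReal (1 - 1/2) * Q s = 0 := by
        exact (add_eq_zero.mp hs).2
      have h2 : ENNReal.ofReal (1 - 1/2) ≠ 0 := by
        simp [ENNReal.ofReal_eq_zero]; norm_num
      exact (mul_eq_zero.mp this).resolve_left h2
    have hint : Integrable X R := h R ⟨hRmem, hμR⟩
    have h1 : Integrable X (ENNReal.ofReal (1/2) • P) :=
      (integrable_add_measure.mp (by rwa [← hR])).1
    have : Integrable X P := by
      have := h1.smul_measure (c := ENNReal.ofReal 2) (by simp)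
      rw [smul_smul] at this
      have he : (ENNReal.ofReal 2) * ENNReal.ofReal (1/2) = 1 := by
        rw [← ENNReal.ofReal_mul (by norm_num)]; norm_num
      rwa [he, one_smul] at this
    exact this
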